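/- Let (ψ, ψ_2, …, ψ_K) be an orthonormal family of vectors in ℂ^d, let λ ∈ (0,1], and let p_2, …, p_K be nonnegative reals with ∑_k p_k = 1. Define ρ = λ·|ψ⟩⟨ψ| + (1−λ)·∑_{k=2}^K p_k·|ψ_k⟩⟨ψ_k|, and let σ be a d×d complex matrix whose operator norm satisfies ‖σ‖ ≤ 1. Then for every n ≥ 1: |Tr[ρ^n σ]/Tr[ρ^n] − ⟨ψ, σψ⟩| ≤ 2Q_n/(1 + Q_n), where Q_n := ((1−λ)/λ)^n · ∑_{k=2}^K p_k^n. -/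

import Mathlib

open Matrix BigOperators

private lemma vmv_mul {d : ℕ} (u v w x : Fin d → ℂ) :
    vecMulVec u v * vecMulVec w x = (v ⬝ᵥ w) • vecMulVec u x := by
  ext i j
  simp only [Matrix.mul_apply, vecMulVec_apply, Matrix.smul_apply, smul_eq_mul, dotProduct]
  rw [Finset.sum_mul]
  exact Finset.sum_congr rfl fun k _ => by ring

private lemma trace_vmv_mul {d : ℕ} (u v : Fin d → ℂ) (σ : Matrix (Fin d) (Fin d) ℂ) :
    (vecMulVec u v * σ).trace = v ⬝ᵥ σ.mulVec u := by
  simp only [Matrix.trace, Matrix.diag, Matrix.mul_apply, vecMulVec_apply, dotProduct,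
    Matrix.mulVec, dotProduct]
  rw [Finset.sum_comm]
  exact Finset.sum_congr rfl fun j _ => by
    rw [Finset.mul_sum]; exact Finset.sum_congr rfl fun i _ => by ring

private lemma trace_vmv {d : ℕ} (u v : Fin d → ℂ) :
    (vecMulVec u v).trace = v ⬝ᵥ u := by
  simp only [Matrix.trace, Matrix.diag, vecMulVec_apply, dotProduct]
  exact Finset.sum_congr rfl fun i _ => by ring

private lemma unit_bound {d : ℕ} (σ : Matrix (Fin d) (Fin d) ℂ)
    (hσ : ‖Matrix.toEuclideanCLM (𝕜 := ℂ) σ‖ ≤ 1)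
    (u : Fin d → ℂ) (hu : star u ⬝ᵥ u = 1) :
    ‖star u ⬝ᵥ σ.mulVec u‖ ≤ 1 := by
  set u' : EuclideanSpace ℂ (Fin d) := (WithLp.equiv 2 _).symm u with hu'
  have h1 : (inner ℂ u' u' : ℂ) = 1 := by
    exact (dotProduct_comm u (star u)).trans hu
  have hnorm : ‖u'‖ = 1 := by
    have h2 : ‖u'‖ = Real.sqrt (RCLike.re (inner ℂ u' u' : ℂ)) := norm_eq_sqrt_re_inner (𝕜 := ℂ) u'
    rw [h1] at h2; simpa using h2
  have h2 : star u ⬝ᵥ σ.mulVec u = (inner ℂ u' ((Matrix.toEuclideanCLM (𝕜 := ℂ) σ) u') : ℂ) := by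
    exact dotProduct_comm (star u) (σ *ᵥ u)
  rw [h2]
  calc ‖(inner ℂ u' ((Matrix.toEuclideanCLM (𝕜 := ℂ) σ) u') : ℂ)‖
      ≤ ‖u'‖ * ‖(Matrix.toEuclideanCLM (𝕜 := ℂ) σ) u'‖ := norm_inner_le_norm _ _
    _ ≤ ‖u'‖ * (‖Matrix.toEuclideanCLM (𝕜 := ℂ) σ‖ * ‖u'‖) := by
        gcongr; exact ContinuousLinearMap.le_opNorm _ _
    _ ≤ 1 := by rw [hnorm]; nlinarith

/-- Method A error bound, paper's Theorem 2: for the noisy state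
`ρ = λ|ψ⟩⟨ψ| + (1−λ)∑_k p_k |ψ_k⟩⟨ψ_k|` with `(ψ, ψ_2, …, ψ_K)` orthonormal,
`λ ∈ (0,1]`, `p_k ≥ 0`, `∑_k p_k = 1`, and `σ` with operator norm `‖σ‖ ≤ 1`:
`|Tr[ρ^n σ]/Tr[ρ^n] − ⟨ψ, σψ⟩| ≤ 2Q_n/(1+Q_n)`, where `Q_n = ((1−λ)/λ)^n ∑_k p_k^n`. -/
theorem methodA_error_bound {d K : ℕ}
    (ψ : Fin d → ℂ) (ψe : Fin K → Fin d → ℂ)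
    (hψ : star ψ ⬝ᵥ ψ = 1)
    (horth : ∀ k, star ψ ⬝ᵥ ψe k = 0)
    (he : ∀ k l, star (ψe k) ⬝ᵥ ψe l = if k = l then 1 else 0)
    (lam : ℝ) (hlam : lam ∈ Set.Ioc (0 : ℝ) 1)
    (p : Fin K → ℝ) (hp : ∀ k, 0 ≤ p k) (hsum : ∑ k, p k = 1)
    (σ : Matrix (Fin d) (Fin d) ℂ)
    (hσ : ‖Matrix.toEuclideanCLM (𝕜 := ℂ) σ‖ ≤ 1)
    (n : ℕ) (hn : 1 ≤ n) :
    let ρ : Matrix (Fin d) (Fin d) ℂ :=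
      (lam : ℂ) • vecMulVec ψ (star ψ) +
        ((1 : ℂ) - (lam : ℂ)) • ∑ k, (p k : ℂ) • vecMulVec (ψe k) (star (ψe k))
    let Qn : ℝ := ((1 - lam) / lam) ^ n * ∑ k, p k ^ n
    ‖(ρ ^ n * σ).trace / (ρ ^ n).trace - star ψ ⬝ᵥ σ.mulVec ψ‖
      ≤ 2 * Qn / (1 + Qn) := by
  intro ρ Qn
  obtain ⟨hlam0, hlam1⟩ := hlam
  have h1m : (0:ℝ) ≤ 1 - lam := by linarith
  set P0 : Matrix (Fin d) (Fin d) ℂ := vecMulVec ψ (star ψ) with hP0def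
  set P : Fin K → Matrix (Fin d) (Fin d) ℂ := fun k => vecMulVec (ψe k) (star (ψe k)) with hPdef
  -- conjugate orthogonality
  have horth' : ∀ k, star (ψe k) ⬝ᵥ ψ = 0 := by
    intro k
    have h := congrArg (starRingEnd ℂ) (horth k)
    simpa [dotProduct, map_sum, mul_comm] using h
  -- projection algebra
  have hP00 : P0 * P0 = P0 := by rw [hP0def, vmv_mul, hψ, one_smul]
  have hP0k : ∀ k, P0 * P k = 0 := fun k => by
    rw [hP0def, hPdef, vmv_mul, horth k, zero_smul]
  have hPk0 : ∀ k, P k * P0 = 0 := fun k => by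
    rw [hP0def, hPdef, vmv_mul, horth' k, zero_smul]
  have hPkl : ∀ k l, P k * P l = if k = l then P k else 0 := fun k l => by
    rw [hPdef, vmv_mul, he k l]
    by_cases h : k = l
    · subst h; simp
    · simp [h]
  have hmul : ∀ (A C : ℂ) (B D : Fin K → ℂ),
      (A • P0 + ∑ k, B k • P k) * (C • P0 + ∑ k, D k • P k)
        = (A*C) • P0 + ∑ k, (B k * D k) • P k := by
    intro A C B D
    have hYW : (∑ k, B k • P k) * (∑ l, D l • P l) = ∑ k, (B k * D k) • P k := by
      rw [Finset.sum_mul]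
      refine Finset.sum_congr rfl fun k _ => ?_
      rw [Finset.mul_sum]
      have h : ∀ l, (B k • P k) * (D l • P l) = if l = k then (B k * D k) • P k else 0 := by
        intro l
        rw [smul_mul_assoc, mul_smul_comm, hPkl k l, smul_smul]
        by_cases h : k = l
        · subst h; simp
        · simp [h, Ne.symm h]
      simp [h]
    rw [add_mul, mul_add, mul_add, hYW]
    rw [smul_mul_assoc, mul_smul_comm, hP00, smul_smul]
    have hXW : (A • P0) * (∑ l, D l • P l) = 0 := by
      rw [Finset.mul_sum]
      simp [mul_smul_comm, smul_mul_assoc, hP0k]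
    have hYZ : (∑ k, B k • P k) * (C • P0) = 0 := by
      rw [Finset.sum_mul]
      simp [mul_smul_comm, smul_mul_assoc, hPk0]
    rw [hXW, hYZ, add_zero, zero_add]
  -- the state in normal form
  have hρ : ρ = (lam:ℂ) • P0 + ∑ k, (((1:ℂ) - lam) * p k) • P k := by
    show (lam : ℂ) • vecMulVec ψ (star ψ) +
        ((1 : ℂ) - (lam : ℂ)) • ∑ k, (p k : ℂ) • vecMulVec (ψe k) (star (ψe k)) = _
    rw [Finset.smul_sum]
    simp only [hP0def, hPdef]
    congr 1
    exact Finset.sum_congr rfl fun k _ => smul_smul _ _ _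
  have key : ∀ m : ℕ, ρ ^ (m+1)
      = ((lam:ℂ)^(m+1)) • P0 + ∑ k, (((1:ℂ) - lam) * p k)^(m+1) • P k := by
    intro m
    induction m with
    | zero => simpa using hρ
    | succ m ih =>
      rw [pow_succ, ih, hρ, hmul]
      simp [pow_succ]
  obtain ⟨m, rfl⟩ : ∃ m, n = m + 1 := ⟨n - 1, (Nat.succ_pred_eq_of_pos hn).symm⟩
  set N := m + 1 with hN
  -- traces
  have htrP0 : P0.trace = 1 := by
    rw [hP0def, trace_vmv]; exact hψ
  have htrP : ∀ k, (P k).trace = 1 := fun k => by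
    rw [hPdef, trace_vmv]
    simpa using he k k
  set c : ℂ := star ψ ⬝ᵥ σ.mulVec ψ with hcdef
  set ck : Fin K → ℂ := fun k => star (ψe k) ⬝ᵥ σ.mulVec (ψe k) with hckdef
  have htrP0σ : (P0 * σ).trace = c := by rw [hP0def, trace_vmv_mul]
  have htrPσ : ∀ k, (P k * σ).trace = ck k := fun k => by rw [hPdef, trace_vmv_mul]
  set S : ℝ := ∑ k, p k ^ N with hSdef
  have hS : 0 ≤ S := Finset.sum_nonneg fun k _ => pow_nonneg (hp k) N
  set t : ℝ := lam ^ N + (1 - lam) ^ N * S with htdef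
  have ht : 0 < t := by positivity
  have htrρ : (ρ ^ N).trace = (t : ℂ) := by
    rw [key m, Matrix.trace_add, Matrix.trace_smul, Matrix.trace_sum, htrP0]
    simp only [Matrix.trace_smul, htrP, smul_eq_mul, mul_one]
    rw [htdef, hSdef]
    push_cast [Finset.mul_sum, mul_pow]
    ring
  have htrρσ : (ρ ^ N * σ).trace
      = (lam:ℂ)^N * c + ∑ k, (((1:ℂ) - lam) * p k)^N * ck k := by
    rw [key m, add_mul, Finset.sum_mul, Matrix.trace_add, Matrix.trace_sum,
      smul_mul_assoc, Matrix.trace_smul, htrP0σ]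
    simp only [smul_mul_assoc, Matrix.trace_smul, htrPσ, smul_eq_mul]
    rfl
  -- bounds on matrix elements
  have hc : ‖c‖ ≤ 1 := unit_bound σ hσ ψ hψ
  have hck : ∀ k, ‖ck k‖ ≤ 1 := fun k =>
    unit_bound σ hσ (ψe k) (by simpa using he k k)
  -- numerator
  have hts : ((t:ℝ):ℂ) = (lam:ℂ)^N + ∑ k, (((1:ℂ)-lam)*(p k))^N := by
    rw [htdef, hSdef]; push_cast [Finset.mul_sum, mul_pow]; ring
  have hnum : (ρ ^ N * σ).trace - c * (t:ℂ)
      = ∑ k, (((1:ℂ) - lam) * p k)^N * (ck k - c) := by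
    rw [htrρσ, hts, mul_add, Finset.mul_sum]
    have h3 : ∑ k, (((1:ℂ)-lam)*p k)^N * (ck k - c)
        = ∑ k, ((((1:ℂ)-lam)*p k)^N * ck k - c * (((1:ℂ)-lam)*p k)^N) :=
      Finset.sum_congr rfl fun k _ => by ring
    rw [h3, Finset.sum_sub_distrib]
    ring
  have hnumbound : ‖(ρ ^ N * σ).trace - c * (t:ℂ)‖ ≤ 2 * ((1-lam)^N * S) := by
    rw [hnum]
    calc ‖∑ k, (((1:ℂ) - lam) * p k)^N * (ck k - c)‖
        ≤ ∑ k, ‖(((1:ℂ) - lam) * p k)^N * (ck k - c)‖ := by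
          exact norm_sum_le _ _
      _ ≤ ∑ k, ((1-lam) * p k)^N * 2 := by
          refine Finset.sum_le_sum fun k _ => ?_
          rw [norm_mul]
          have h1 : ‖(((1:ℂ) - lam) * p k)^N‖ = ((1-lam) * p k)^N := by
            have : (((1:ℂ) - lam) * p k) = (((1-lam) * p k : ℝ) : ℂ) := by push_cast; ring
            rw [this, ← Complex.ofReal_pow, Complex.norm_real, Real.norm_eq_abs,
              abs_of_nonneg (pow_nonneg (mul_nonneg h1m (hp k)) N)]
          rw [h1]
          have h2 : ‖ck k - c‖ ≤ 2 := by
            calc ‖ck k - c‖ ≤ ‖ck k‖ + ‖c‖ :=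
                norm_sub_le _ _
              _ ≤ 2 := by linarith [hck k, hc]
          exact mul_le_mul_of_nonneg_left h2 (pow_nonneg (mul_nonneg h1m (hp k)) N)
      _ = 2 * ((1-lam)^N * S) := by
          rw [hSdef, Finset.mul_sum, Finset.mul_sum]
          exact Finset.sum_congr rfl fun k _ => by rw [mul_pow]; ring
  -- assemble
  have hexpr : (ρ ^ N * σ).trace / (ρ ^ N).trace - c
      = ((ρ ^ N * σ).trace - c * (t:ℂ)) / (t:ℂ) := by
    have htne : (t:ℂ) ≠ 0 := Complex.ofReal_ne_zero.mpr (ne_of_gt ht)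
    rw [htrρ, sub_div, mul_div_cancel_right₀ c htne]
  have hQn : Qn = (1-lam)^N * S / lam^N := by
    show ((1 - lam) / lam) ^ N * S = _
    rw [div_pow]; ring
  have hRHS : 2 * Qn / (1 + Qn) = 2 * ((1-lam)^N * S) / t := by
    have hl : (0:ℝ) < lam ^ N := by positivity
    have hQnn : 0 ≤ Qn := by rw [hQn]; positivity
    rw [div_eq_div_iff (by intro h; nlinarith : (1:ℝ) + Qn ≠ 0) (ne_of_gt ht), hQn, htdef]
    field_simp
  rw [hexpr, hRHS, norm_div, Complex.norm_real, Real.norm_eq_abs, abs_of_pos ht]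
  exact (div_le_div_iff_of_pos_right ht).mpr hnumbound
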